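/- For any two distinct messages p, q ∈ {0,1}^k, the codewords satisfy ℓ∞(E_{n,k}^λ(p), E_{n,k}^λ(q)) ≥ ⌊(n − k)/λ⌋; that is, C_{n,k}^λ is a (λ, n, ⌊(n−k)/λ⌋)-frequency permutation array. -/

import Mathlib

open Finset

/-- Ceiling division: `cdiv a b = ⌈a/b⌉` for natural numbers (with `b > 0`). -/
def cdiv (a b : ℕ) : ℕ := (a + b - 1) / b

/-- `ones msg i` : number of indices `j < i` (0-indexed) with `msg j = 1`. -/
def ones {k : ℕ} (msg : Fin k → Bool) (i : ℕ) : ℕ :=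
  (univ.filter fun j : Fin k => j.val < i ∧ msg j = true).card

/-- `zeros msg i` : number of indices `j < i` (0-indexed) with `msg j = 0`. -/
def zeros {k : ℕ} (msg : Fin k → Bool) (i : ℕ) : ℕ :=
  (univ.filter fun j : Fin k => j.val < i ∧ msg j = false).card

/-- The encoding map `E_{n,k}^λ`.  The `i`-th entry (0-indexed `i`, so 1-indexed
position `i+1`) of the codeword of `msg` is `⌈(n − o_i)/λ⌉` if `msg i = 1`,
`⌈(1 + z_i)/λ⌉` if `msg i = 0` (where `o_i`, `z_i` count ones resp. zeros among
the earlier message bits), and `⌈((i+1) − o)/λ⌉` for positions past `k`, where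
`o` is the total number of ones in `msg`. -/
def enc (n k lam : ℕ) (msg : Fin k → Bool) : Fin n → ℕ :=
  fun i =>
    if h : i.val < k then
      if msg ⟨i.val, h⟩ = true then cdiv (n - ones msg i.val) lam
      else cdiv (1 + zeros msg i.val) lam
    else cdiv (i.val + 1 - ones msg k) lam

/-- `ℓ∞` distance between two sequences of naturals. -/
def linfN {n : ℕ} (x y : Fin n → ℕ) : ℕ :=
  univ.sup fun i => ((x i : ℤ) - (y i : ℤ)).natAbs

/-- Membership in `S_n^λ` : all entries lie in `{1,…,m}` and each symbol
`v ∈ {1,…,m}` occurs exactly `λ` times. -/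
def memSnl (n m lam : ℕ) (x : Fin n → ℕ) : Prop :=
  (∀ i, x i ∈ Finset.Icc 1 m) ∧
  ∀ v ∈ Finset.Icc 1 m, (univ.filter fun i => x i = v).card = lam

lemma cdiv_mono (l : ℕ) {a b : ℕ} (h : a ≤ b) : cdiv a l ≤ cdiv b l :=
  Nat.div_le_div_right (by omega)

lemma cdiv_add_mul (l b t : ℕ) (hl : 0 < l) : cdiv (b + l * t) l = cdiv b l + t := by
  unfold cdiv
  rw [show b + l * t + l - 1 = (b + l - 1) + l * t by omega, Nat.add_mul_div_left _ _ hl]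

lemma key_div (l a b : ℕ) (hl : 0 < l) (hba : b ≤ a) :
    (a - b) / l + cdiv b l ≤ cdiv a l := by
  have h1 : l * ((a - b) / l) ≤ a - b := Nat.mul_div_le _ _
  have h2 : cdiv (b + l * ((a - b) / l)) l ≤ cdiv a l := cdiv_mono l (by omega)
  rw [cdiv_add_mul l b _ hl] at h2
  omega

lemma card_filter_lt (k i : ℕ) (h : i ≤ k) :
    (univ.filter fun j : Fin k => j.val < i).card = i := by
  rcases Nat.lt_or_ge i k with h' | h'
  · have e : (univ.filter fun j : Fin k => j.val < i) = Finset.Iio ⟨i, h'⟩ := by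
      ext j; simp [Fin.lt_def]
    rw [e, Fin.card_Iio]
  · obtain rfl : i = k := le_antisymm h h'
    have e : (univ.filter fun j : Fin i => j.val < i) = univ := by
      ext j; simp [j.is_lt]
    rw [e, card_univ, Fintype.card_fin]

lemma ones_add_zeros {k : ℕ} (msg : Fin k → Bool) (i : ℕ) (h : i ≤ k) :
    ones msg i + zeros msg i = i := by
  have h1 : (univ.filter fun j : Fin k => j.val < i) =
      univ.filter fun j : Fin k => (j.val < i ∧ msg j = true) ∨ (j.val < i ∧ msg j = false) := by
    ext j; by_cases hm : msg j = true <;> simp [hm]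
  have h2 := card_filter_lt k i h
  rw [h1, Finset.filter_or, card_union_of_disjoint (by
    rw [Finset.disjoint_left]
    intro j hj1 hj2
    simp only [mem_filter] at hj1 hj2
    rw [hj1.2.2] at hj2
    simp at hj2)] at h2
  unfold ones zeros
  exact h2

lemma ones_congr {k : ℕ} {p q : Fin k → Bool} (i : ℕ)
    (h : ∀ j : Fin k, j.val < i → p j = q j) : ones p i = ones q i := by
  unfold ones
  congr 1
  ext j
  simp only [mem_filter, mem_univ, true_and]
  constructor <;> rintro ⟨h1, h2⟩
  · exact ⟨h1, (h j h1) ▸ h2⟩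
  · exact ⟨h1, (h j h1).symm ▸ h2⟩

lemma zeros_congr {k : ℕ} {p q : Fin k → Bool} (i : ℕ)
    (h : ∀ j : Fin k, j.val < i → p j = q j) : zeros p i = zeros q i := by
  unfold zeros
  congr 1
  ext j
  simp only [mem_filter, mem_univ, true_and]
  constructor <;> rintro ⟨h1, h2⟩
  · exact ⟨h1, (h j h1) ▸ h2⟩
  · exact ⟨h1, (h j h1).symm ▸ h2⟩

lemma linfN_comm {n : ℕ} (x y : Fin n → ℕ) : linfN x y = linfN y x := by
  unfold linfN
  congr 1
  funext i
  omega

lemma main_half (lam k n : ℕ) (hl : 0 < lam) (hkn : k + lam ≤ n)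
    (p q : Fin k → Bool) (i : Fin k) (hp : p i = true) (hq : q i = false)
    (hbef : ∀ j : Fin k, j.val < i.val → p j = q j) :
    (n - k) / lam ≤ linfN (enc n k lam p) (enc n k lam q) := by
  have hkn' : k ≤ n := by omega
  have hin : i.val < n := lt_of_lt_of_le i.is_lt hkn'
  set idx : Fin n := ⟨i.val, hin⟩
  have hle : ((n - k) / lam : ℕ) ≤ ((enc n k lam p idx : ℤ) - (enc n k lam q idx : ℤ)).natAbs := by
    have hik : idx.val < k := i.is_lt
    have ep : enc n k lam p idx = cdiv (n - ones p i.val) lam := by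
      simp only [enc, dif_pos hik]
      rw [if_pos (by simpa using hp)]
    have eq' : enc n k lam q idx = cdiv (1 + zeros p i.val) lam := by
      simp only [enc, dif_pos hik]
      rw [if_neg (by simpa using hq), zeros_congr i.val hbef]
    rw [ep, eq']
    set o := ones p i.val with ho
    set z := zeros p i.val with hz
    have hoz : o + z = i.val := ones_add_zeros p i.val (le_of_lt i.is_lt)
    have hik' : i.val < k := i.is_lt
    set a := n - o
    set b := 1 + z
    have hba : b ≤ a := by omega
    have hk1 := key_div lam a b hl hba
    have hmono : (n - k) / lam ≤ (a - b) / lam := Nat.div_le_div_right (by omega)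
    have hcc : cdiv b lam ≤ cdiv a lam := cdiv_mono lam hba
    omega
  unfold linfN
  exact le_trans hle (Finset.le_sup (f := fun j => ((enc n k lam p j : ℤ) - (enc n k lam q j : ℤ)).natAbs) (mem_univ idx))

/-- Any two distinct codewords of `E_{n,k}^λ` are at `ℓ∞`-distance at least
`⌊(n−k)/λ⌋`, i.e. `C_{n,k}^λ` is a `(λ,n,⌊(n−k)/λ⌋)`-FPA. -/
theorem enc_min_distance (lam m k : ℕ) (hl : 0 < lam) (hm : 0 < m) (hk : 0 < k)
    (n : ℕ) (hn : n = m * lam) (hkn : k + lam ≤ n)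
    (p q : Fin k → Bool) (hpq : p ≠ q) :
    (n - k) / lam ≤ linfN (enc n k lam p) (enc n k lam q) := by
  have hne : (univ.filter fun j : Fin k => p j ≠ q j).Nonempty := by
    rcases Function.ne_iff.mp hpq with ⟨j, hj⟩
    exact ⟨j, by simp [hj]⟩
  set i := (univ.filter fun j : Fin k => p j ≠ q j).min' hne with hi
  have hiMem : p i ≠ q i := by
    have := Finset.min'_mem _ hne
    simpa using this
  have hbef : ∀ j : Fin k, j.val < i.val → p j = q j := by
    intro j hj
    by_contra hc
    have : i ≤ j := Finset.min'_le _ j (by simp [hc])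
    exact absurd hj (by simpa using this)
  cases hpi : p i with
  | true =>
    have hqi : q i = false := by
      cases h : q i
      · rfl
      · exact absurd (hpi.trans h.symm) hiMem
    exact main_half lam k n hl hkn p q i hpi hqi hbef
  | false =>
    have hqi : q i = true := by
      cases h : q i
      · exact absurd (hpi.trans h.symm) hiMem
      · rfl
    rw [linfN_comm]
    exact main_half lam k n hl hkn q p i hqi hpi (fun j hj => (hbef j hj).symm)
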